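/- Let k be a field of characteristic zero and m a Lie algebra over k. Then in L₊(m), for all a, b, c, d ∈ m: [ad_{[a,b]}, ad_{[c,d]}] = [ad_{[[a,b],c]}, ad_d] + [ad_c, ad_{[[a,b],d]}]. -/

import Mathlib

namespace LplusDef

variable (k : Type*) [Field k] (m : Type*) [LieRing m] [LieAlgebra k m]

/-- The set of relations defining `L₊(m)` inside the free Lie algebra on (the
underlying type of) `m`: linearity of the generators `ad`, and
`[[ad_a, ad_b], ad_c] + [ad_[a,b], ad_c] - ad_([[a,b],c] + [[a,c],b] + [a,[b,c]])`. -/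
def relSet : Set (FreeLieAlgebra k m) :=
  {x | ∃ (α β : k) (a b : m),
      x = FreeLieAlgebra.of k (α • a + β • b)
          - α • FreeLieAlgebra.of k a - β • FreeLieAlgebra.of k b} ∪
  {x | ∃ a b c : m,
      x = ⁅⁅FreeLieAlgebra.of k a, FreeLieAlgebra.of k b⁆, FreeLieAlgebra.of k c⁆
          + ⁅FreeLieAlgebra.of k ⁅a, b⁆, FreeLieAlgebra.of k c⁆
          - FreeLieAlgebra.of k (⁅⁅a, b⁆, c⁆ + ⁅⁅a, c⁆, b⁆ + ⁅a, ⁅b, c⁆⁆)}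

/-- The Lie ideal of the free Lie algebra generated by the relations. -/
noncomputable def relIdeal : LieIdeal k (FreeLieAlgebra k m) :=
  LieSubmodule.lieSpan k (FreeLieAlgebra k m) (relSet k m)

/-- `L₊(m)`: the quotient of the free Lie algebra on `m` by the relations ideal. -/
abbrev Lplus := FreeLieAlgebra k m ⧸ relIdeal k m

/-- `ad_a`: the image in `L₊(m)` of the generator corresponding to `a : m`. -/
noncomputable def adgen (a : m) : Lplus k m :=
  LieSubmodule.Quotient.mk' (relIdeal k m) (FreeLieAlgebra.of k a)

end LplusDef


section Aux
open LplusDef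

variable {k : Type*} [Field k] {m : Type*} [LieRing m] [LieAlgebra k m]

lemma adgen_mk_rel {x : FreeLieAlgebra k m} (hx : x ∈ relSet k m) :
    (LieSubmodule.Quotient.mk (N := relIdeal k m) x) = 0 := by
  rw [LieSubmodule.Quotient.mk_eq_zero']
  exact LieSubmodule.subset_lieSpan hx

lemma adgen_eq (a : m) :
    adgen k m a = LieSubmodule.Quotient.mk (N := relIdeal k m) (FreeLieAlgebra.of k a) := rfl

lemma adgen_smul_add (α β : k) (a b : m) :
    adgen k m (α • a + β • b) = α • adgen k m a + β • adgen k m b := by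
  have h := adgen_mk_rel (k := k) (m := m) (Or.inl ⟨α, β, a, b, rfl⟩)
  rw [show (LieSubmodule.Quotient.mk : FreeLieAlgebra k m → Lplus k m)
      = (relIdeal k m).toSubmodule.mkQ from rfl] at h
  rw [map_sub, map_sub, map_smul, map_smul, sub_sub, sub_eq_zero] at h
  simpa [adgen_eq] using h

lemma adgen_add (a b : m) : adgen k m (a + b) = adgen k m a + adgen k m b := by
  simpa using adgen_smul_add (1 : k) 1 a b

lemma adgen_sub (a b : m) : adgen k m (a - b) = adgen k m a - adgen k m b := by
  have := adgen_smul_add (1 : k) (-1) a b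
  simpa [sub_eq_add_neg] using this

lemma adgen_rel3 (a b c : m) :
    ⁅⁅adgen k m a, adgen k m b⁆, adgen k m c⁆ + ⁅adgen k m ⁅a, b⁆, adgen k m c⁆
      = adgen k m (⁅⁅a, b⁆, c⁆ + ⁅⁅a, c⁆, b⁆ + ⁅a, ⁅b, c⁆⁆) := by
  have h := adgen_mk_rel (k := k) (m := m) (Or.inr ⟨a, b, c, rfl⟩)
  rw [show (LieSubmodule.Quotient.mk : FreeLieAlgebra k m → Lplus k m)
      = (relIdeal k m).toSubmodule.mkQ from rfl] at h
  rw [map_sub, sub_eq_zero, map_add] at h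
  rw [show ((relIdeal k m).toSubmodule.mkQ : FreeLieAlgebra k m → Lplus k m)
      = (LieSubmodule.Quotient.mk : FreeLieAlgebra k m → Lplus k m) from rfl] at h
  simp only [LieSubmodule.Quotient.mk_bracket] at h
  simpa [adgen_eq] using h

lemma adgen_neg (a : m) : adgen k m (-a) = - adgen k m a := by
  have := adgen_smul_add (-1 : k) 0 a a
  simpa using this

lemma jac {L : Type*} [LieRing L] (x y z : L) :
    ⁅⁅x, y⁆, z⁆ = -⁅⁅z, x⁆, y⁆ + ⁅⁅z, y⁆, x⁆ := by
  have h1 : ⁅⁅z, x⁆, y⁆ = ⁅z, ⁅x, y⁆⁆ - ⁅x, ⁅z, y⁆⁆ := lie_lie z x y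
  have h2 : ⁅⁅z, y⁆, x⁆ = ⁅z, ⁅y, x⁆⁆ - ⁅y, ⁅z, x⁆⁆ := lie_lie z y x
  have h3 : ⁅⁅x, y⁆, z⁆ = ⁅x, ⁅y, z⁆⁆ - ⁅y, ⁅x, z⁆⁆ := lie_lie x y z
  have h4 : ⁅z, ⁅x, y⁆⁆ = ⁅y, ⁅x, z⁆⁆ - ⁅x, ⁅y, z⁆⁆ := by
    have h5 : ⁅z, ⁅x, y⁆⁆ = -⁅⁅x, y⁆, z⁆ := by rw [← lie_skew ⁅x, y⁆ z, neg_neg]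
    rw [h5, h3]; abel
  rw [h1, h2, h3, ← lie_skew y x, ← lie_skew z y, ← lie_skew z x, lie_neg, lie_neg, lie_neg, h4]
  abel

lemma adR (x y z : m) :
    ⁅adgen k m ⁅x, y⁆, adgen k m z⁆
      = adgen k m ⁅⁅x, y⁆, z⁆ + adgen k m ⁅⁅x, y⁆, z⁆
        - ⁅⁅adgen k m x, adgen k m y⁆, adgen k m z⁆ := by
  have h := adgen_rel3 (k := k) (m := m) x y z
  have hm : ⁅⁅x, y⁆, z⁆ + ⁅⁅x, z⁆, y⁆ + ⁅x, ⁅y, z⁆⁆ = ⁅⁅x, y⁆, z⁆ + ⁅⁅x, y⁆, z⁆ := by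
    rw [lie_lie x z y, ← lie_skew z y, ← lie_skew z ⁅x, y⁆, lie_neg]
    abel
  rw [hm, adgen_add] at h
  rw [eq_sub_iff_add_eq, add_comm]
  exact h

end Aux

open LplusDef in
/-- in `L₊(m)`,
`[ad_[a,b], ad_[c,d]] = [ad_[[a,b],c], ad_d] + [ad_c, ad_[[a,b],d]]`. -/
theorem adgen_bracket_identity
    (k : Type*) [Field k] [CharZero k]
    (m : Type*) [LieRing m] [LieAlgebra k m] :
    ∀ a b c d : m,
      ⁅adgen k m ⁅a, b⁆, adgen k m ⁅c, d⁆⁆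
        = ⁅adgen k m ⁅⁅a, b⁆, c⁆, adgen k m d⁆
          + ⁅adgen k m c, adgen k m ⁅⁅a, b⁆, d⁆⁆ := by
  intro a b c d
  have h1 := adR (k := k) (m := m) c d ⁅a, b⁆
  have h2 := adR (k := k) (m := m) ⁅a, b⁆ c d
  have h3 := adR (k := k) (m := m) ⁅a, b⁆ d c
  -- rewrite adgen ⁅⁅c,d⁆,⁅a,b⁆⁆ as -adgen ⁅⁅a,b⁆,⁅c,d⁆⁆
  have hqp : adgen k m ⁅⁅c, d⁆, ⁅a, b⁆⁆ = - adgen k m ⁅⁅a, b⁆, ⁅c, d⁆⁆ := by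
    rw [← lie_skew ⁅a, b⁆ ⁅c, d⁆, adgen_neg, neg_neg]
  -- m-level identity: ⁅⁅p,c⁆,d⁆ = ⁅p,⁅c,d⁆⁆ + ⁅⁅p,d⁆,c⁆
  have hm2 : ⁅⁅⁅a, b⁆, c⁆, d⁆ = ⁅⁅a, b⁆, ⁅c, d⁆⁆ + ⁅⁅⁅a, b⁆, d⁆, c⁆ := by
    rw [lie_lie ⁅a, b⁆ c d, ← lie_skew c ⁅⁅a, b⁆, d⁆, lie_lie]
    abel
  rw [hqp] at h1
  rw [hm2, adgen_add] at h2
  have hL : ⁅adgen k m ⁅a, b⁆, adgen k m ⁅c, d⁆⁆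
      = -⁅adgen k m ⁅c, d⁆, adgen k m ⁅a, b⁆⁆ := (lie_skew _ _).symm
  have hsk : ⁅adgen k m c, adgen k m ⁅⁅a, b⁆, d⁆⁆
      = -⁅adgen k m ⁅⁅a, b⁆, d⁆, adgen k m c⁆ := (lie_skew _ _).symm
  rw [hL, h1, hsk, h2, h3]
  rw [jac (adgen k m c) (adgen k m d) (adgen k m ⁅a, b⁆)]
  abel
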